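/- If ν > 0, every solution of the Hopf system converges to the origin as t → +∞, i.e., the singleton {(0,0,0)} attracts all trajectories. -/

import Mathlib

open Real Filter

theorem stmt7 (μ β ν : ℝ) (hμ : 0 < μ) (hν : 0 < ν) (x y z : ℝ → ℝ)
    (hx : ∀ t : ℝ, HasDerivAt x (-μ * x t - (y t)^2 - (z t)^2) t)
    (hy : ∀ t : ℝ, HasDerivAt y (-ν * y t + x t * y t + β * z t) t)
    (hz : ∀ t : ℝ, HasDerivAt z (-ν * z t + x t * z t - β * y t) t) :
    Filter.Tendsto (fun t => (x t, y t, z t)) Filter.atTop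
      (nhds ((0, 0, 0) : ℝ × ℝ × ℝ)) := by
  set c := min μ ν with hcdef
  have hc0 : 0 < c := lt_min hμ hν
  set V : ℝ → ℝ := fun t => (x t)^2 + (y t)^2 + (z t)^2 with hVdef
  have hV : ∀ t, HasDerivAt V (-2*μ*(x t)^2 - 2*ν*((y t)^2 + (z t)^2)) t := by
    intro t
    have h := (((hx t).pow 2).add ((hy t).pow 2)).add ((hz t).pow 2)
    have h' : HasDerivAt V _ t := h
    convert h' using 1
    rw [show (2:ℕ) - 1 = 1 from rfl]; push_cast; ring
  set g : ℝ → ℝ := fun t => V t * Real.exp (2*c*t) with hgdef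
  have hg : ∀ t, HasDerivAt g
      ((-2*μ*(x t)^2 - 2*ν*((y t)^2 + (z t)^2)) * Real.exp (2*c*t)
        + V t * (Real.exp (2*c*t) * (2*c))) t := by
    intro t
    have he : HasDerivAt (fun t => Real.exp (2*c*t)) (Real.exp (2*c*t) * (2*c)) t := by
      simpa using (((hasDerivAt_id t).const_mul (2*c)).exp)
    exact (hV t).mul he
  have hderiv_nonpos : ∀ t, deriv g t ≤ 0 := by
    intro t
    rw [(hg t).deriv]
    have h1 : c ≤ μ := min_le_left _ _
    have h2 : c ≤ ν := min_le_right _ _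
    have hE : 0 < Real.exp (2*c*t) := Real.exp_pos _
    have key : (-2*μ*(x t)^2 - 2*ν*((y t)^2 + (z t)^2)) + V t * (2*c) ≤ 0 := by
      have : V t * (2*c) = 2*c*(x t)^2 + 2*c*((y t)^2 + (z t)^2) := by
        simp only [hVdef]; ring
      rw [this]
      nlinarith [sq_nonneg (x t), sq_nonneg (y t), sq_nonneg (z t)]
    nlinarith
  have hanti : Antitone g :=
    antitone_of_deriv_nonpos (fun t => (hg t).differentiableAt) hderiv_nonpos
  have hVle : ∀ t ≥ (0:ℝ), V t ≤ V 0 * Real.exp (-(2*c*t)) := by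
    intro t ht
    have h1 : g t ≤ g 0 := hanti ht
    simp only [hgdef] at h1
    rw [mul_zero, Real.exp_zero, mul_one] at h1
    rw [Real.exp_neg, ← div_eq_mul_inv, le_div_iff₀ (Real.exp_pos _)]
    exact h1
  have hexp : Tendsto (fun t => V 0 * Real.exp (-(2*c*t))) atTop (nhds 0) := by
    have h1 : Tendsto (fun t : ℝ => 2*c*t) atTop atTop :=
      tendsto_id.const_mul_atTop (by positivity)
    have h2 : Tendsto (fun t : ℝ => Real.exp (-(2*c*t))) atTop (nhds 0) :=
      Real.tendsto_exp_atBot.comp (tendsto_neg_atBot_iff.mpr h1)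
    simpa using h2.const_mul (V 0)
  have hVtends : Tendsto V atTop (nhds 0) := by
    apply tendsto_of_tendsto_of_tendsto_of_le_of_le' tendsto_const_nhds hexp
    · filter_upwards with t; positivity
    · filter_upwards [eventually_ge_atTop (0:ℝ)] with t ht using hVle t ht
  have coord : ∀ f : ℝ → ℝ, (∀ t, (f t)^2 ≤ V t) → Tendsto f atTop (nhds 0) := by
    intro f hf
    have hsq : Tendsto (fun t => (f t)^2) atTop (nhds 0) := by
      apply tendsto_of_tendsto_of_tendsto_of_le_of_le tendsto_const_nhds hVtends
      · intro t; positivity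
      · exact hf
    have habs : Tendsto (fun t => |f t|) atTop (nhds 0) := by
      have := (Real.continuous_sqrt.tendsto 0).comp hsq
      simpa [Function.comp_def, Real.sqrt_sq_eq_abs] using this
    exact tendsto_zero_iff_abs_tendsto_zero f |>.mpr habs
  have hx0 : Tendsto x atTop (nhds 0) := coord x (fun t => by simp only [hVdef]; nlinarith [sq_nonneg (y t), sq_nonneg (z t)])
  have hy0 : Tendsto y atTop (nhds 0) := coord y (fun t => by simp only [hVdef]; nlinarith [sq_nonneg (x t), sq_nonneg (z t)])
  have hz0 : Tendsto z atTop (nhds 0) := coord z (fun t => by simp only [hVdef]; nlinarith [sq_nonneg (x t), sq_nonneg (y t)])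
  exact hx0.prodMk_nhds (hy0.prodMk_nhds hz0)
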